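/- Let d ≥ 1, let G be a SIC POVM on ℂ^d, and let n ≥ 3. For k = 1,…,n let m_k ≥ 1 and let c_k : Fin (d²) → Fin m_k be a surjection (so the fibers of c_k partition Fin (d²) into m_k nonempty bins), and define E^k(ν) = Σ_{i : c_k i = ν} G i. Assume that for all k ≠ ℓ and all ν ∈ Fin m_k, μ ∈ Fin m_ℓ one has Tr(E^k(ν) · E^ℓ(μ)) = 1/d. Then m_k = d for every k, every fiber of every c_k has cardinality exactly d (so each c_k is a d-partition), and for all k ≠ ℓ the partitions c_k and c_ℓ share the 1-overlap property: |{i : c_k i = ν ∧ c_ℓ i = μ}| = 1 for all ν, μ. -/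

import Mathlib

open Matrix Finset
open scoped ComplexOrder

/-- A SIC POVM on `ℂ^d`. -/
def IsSICPOVM (d : ℕ) (G : Fin (d ^ 2) → Matrix (Fin d) (Fin d) ℂ) : Prop :=
  (∀ i, (G i).PosSemidef) ∧ (∑ i, G i = 1) ∧
    (∀ i j, i ≠ j → (G i * G j).trace = 1 / ((d : ℂ) ^ 2 * ((d : ℂ) + 1))) ∧
    (∀ i, (G i * G i).trace = 1 / (d : ℂ) ^ 2)

theorem stmt8 (d : ℕ) (hd : 1 ≤ d) (G : Fin (d ^ 2) → Matrix (Fin d) (Fin d) ℂ)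
    (hG : IsSICPOVM d G) (n : ℕ) (hn : 3 ≤ n) (m : Fin n → ℕ) (hm : ∀ k, 1 ≤ m k)
    (c : (k : Fin n) → Fin (d ^ 2) → Fin (m k)) (hsurj : ∀ k, Function.Surjective (c k))
    (hMU : ∀ k l, k ≠ l → ∀ (ν : Fin (m k)) (μ : Fin (m l)),
      ((∑ i ∈ Finset.univ.filter fun i => c k i = ν, G i) *
        (∑ i ∈ Finset.univ.filter fun i => c l i = μ, G i)).trace = 1 / (d : ℂ)) :
    (∀ k, m k = d) ∧
    (∀ k (ν : Fin (m k)), (Finset.univ.filter fun i => c k i = ν).card = d) ∧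
    (∀ k l, k ≠ l → ∀ (ν : Fin (m k)) (μ : Fin (m l)),
      (Finset.univ.filter fun i => c k i = ν ∧ c l i = μ).card = 1) := by
  obtain ⟨hpos, hsum, hoff, hdiag⟩ := hG
  have hd0 : (d : ℂ) ≠ 0 := Nat.cast_ne_zero.mpr (by omega)
  have hd1 : (d : ℂ) + 1 ≠ 0 := by
    have : ((d + 1 : ℕ) : ℂ) ≠ 0 := Nat.cast_ne_zero.mpr (by omega)
    simpa using this
  -- trace of product of partial sums
  have htr : ∀ A B : Finset (Fin (d ^ 2)),
      ((∑ i ∈ A, G i) * (∑ j ∈ B, G j)).trace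
        = (↑(A.card * B.card) : ℂ) * (1 / ((d : ℂ) ^ 2 * ((d : ℂ) + 1)))
          + ((A ∩ B).card : ℂ) * (1 / (d : ℂ) ^ 2 - 1 / ((d : ℂ) ^ 2 * ((d : ℂ) + 1))) := by
    intro A B
    rw [Finset.sum_mul_sum, Matrix.trace_sum]
    have h1 : ∀ i ∈ A, (∑ j ∈ B, G i * G j).trace
        = ∑ j ∈ B, (1 / ((d : ℂ) ^ 2 * ((d : ℂ) + 1))
            + if i = j then 1 / (d : ℂ) ^ 2 - 1 / ((d : ℂ) ^ 2 * ((d : ℂ) + 1)) else 0) := by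
      intro i _
      rw [Matrix.trace_sum]
      refine Finset.sum_congr rfl fun j _ => ?_
      by_cases hij : i = j
      · subst hij; simp [hdiag i]
      · simp [hij, hoff i j hij]
    rw [Finset.sum_congr rfl h1]
    simp only [Finset.sum_add_distrib, Finset.sum_const, nsmul_eq_mul,
      Finset.sum_ite_eq B, ← Finset.sum_filter, Finset.filter_mem_eq_inter]
    push_cast
    ring
  -- the key combinatorial equation
  have key : ∀ k l, k ≠ l → ∀ (ν : Fin (m k)) (μ : Fin (m l)),
      (Finset.univ.filter fun i => c k i = ν ∧ c l i = μ).card * d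
        + (Finset.univ.filter fun i => c k i = ν).card
            * (Finset.univ.filter fun i => c l i = μ).card
        = d * (d + 1) := by
    intro k l hkl ν μ
    have h := hMU k l hkl ν μ
    rw [htr] at h
    rw [show (Finset.univ.filter fun i => c k i = ν) ∩ (Finset.univ.filter fun i => c l i = μ)
        = Finset.univ.filter fun i => c k i = ν ∧ c l i = μ from
      (Finset.filter_and _ _ _).symm] at h
    set a := (Finset.univ.filter fun i => c k i = ν).card with ha
    set b := (Finset.univ.filter fun i => c l i = μ).card with hb
    set t := (Finset.univ.filter fun i => c k i = ν ∧ c l i = μ).card with ht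
    have keyC : ((t * d + a * b : ℕ) : ℂ) = ((d * (d + 1) : ℕ) : ℂ) := by
      push_cast
      field_simp at h
      exact mul_right_cancel₀ hd0 (by push_cast at h; linear_combination (d : ℂ) * h)
    exact_mod_cast keyC
  -- fiber sums
  have fibsum : ∀ l, ∑ μ : Fin (m l), (Finset.univ.filter fun i => c l i = μ).card = d ^ 2 := by
    intro l
    have := Finset.card_eq_sum_card_fiberwise
      (f := c l) (s := (Finset.univ : Finset (Fin (d ^ 2)))) (t := Finset.univ)
      (fun x _ => Finset.mem_univ _)
    simpa using this.symm
  have fibinter : ∀ k l (ν : Fin (m k)),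
      ∑ μ : Fin (m l), (Finset.univ.filter fun i => c k i = ν ∧ c l i = μ).card
        = (Finset.univ.filter fun i => c k i = ν).card := by
    intro k l ν
    have := Finset.card_eq_sum_card_fiberwise
      (f := c l) (s := Finset.univ.filter fun i => c k i = ν) (t := Finset.univ)
      (fun x _ => Finset.mem_univ _)
    simp only [Finset.filter_filter] at this
    simpa using this.symm
  -- every fiber of c k has cardinality m l for any l ≠ k
  have hfib : ∀ k l, k ≠ l → ∀ ν : Fin (m k),
      (Finset.univ.filter fun i => c k i = ν).card = m l := by
    intro k l hkl ν
    set a := (Finset.univ.filter fun i => c k i = ν).card with ha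
    have hs : ∑ μ : Fin (m l),
        ((Finset.univ.filter fun i => c k i = ν ∧ c l i = μ).card * d
          + a * (Finset.univ.filter fun i => c l i = μ).card)
        = m l * (d * (d + 1)) := by
      rw [Finset.sum_congr rfl fun μ _ => key k l hkl ν μ]
      simp [mul_comm]
    rw [Finset.sum_add_distrib, ← Finset.sum_mul, fibinter, ← Finset.mul_sum, fibsum] at hs
    have h2 : a * (d * (d + 1)) = m l * (d * (d + 1)) := by
      calc a * (d * (d + 1)) = a * d + a * d ^ 2 := by ring
        _ = m l * (d * (d + 1)) := hs
    exact Nat.eq_of_mul_eq_mul_right (by positivity) h2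
  -- a third index always exists
  have third : ∀ k l : Fin n, ∃ p : Fin n, p ≠ k ∧ p ≠ l := by
    intro k l
    have hc : (({k, l} : Finset (Fin n))ᶜ).Nonempty := by
      rw [← Finset.card_pos, Finset.card_compl]
      have h2 : ({k, l} : Finset (Fin n)).card ≤ 2 :=
        (Finset.card_insert_le _ _).trans (by simp)
      simp only [Fintype.card_fin]
      omega
    obtain ⟨p, hp⟩ := hc
    simp only [Finset.mem_compl, Finset.mem_insert, Finset.mem_singleton, not_or] at hp
    exact ⟨p, hp.1, hp.2⟩
  -- all m's are equal
  have mall : ∀ k l : Fin n, m k = m l := by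
    intro k l
    by_cases hkl : k = l
    · rw [hkl]
    obtain ⟨p, hpk, hpl⟩ := third k l
    have ν : Fin (m l) := ⟨0, hm l⟩
    have ν' : Fin (m k) := ⟨0, hm k⟩
    have h1 := hfib l k (fun h => hkl h.symm) ν
    have h2 := hfib l p (fun h => hpl h.symm) ν
    have h3 := hfib k p (fun h => hpk h.symm) ν'
    have h4 := hfib k l hkl ν'
    omega
  -- each m k = d
  have hMd : ∀ k, m k = d := by
    intro k
    obtain ⟨l, hlk, -⟩ := third k k
    have hprod : m k * m l = d ^ 2 := by
      have := fibsum k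
      rw [Finset.sum_congr rfl fun ν _ => hfib k l (fun h => hlk h.symm) ν] at this
      simpa [mul_comm] using this
    have heq := mall k l
    have : m k * m k = d * d := by nlinarith [hprod, heq]
    exact Nat.mul_self_inj.mp this
  refine ⟨hMd, ?_, ?_⟩
  · intro k ν
    obtain ⟨l, hlk, -⟩ := third k k
    rw [hfib k l (fun h => hlk h.symm) ν, hMd l]
  · intro k l hkl ν μ
    have h := key k l hkl ν μ
    obtain ⟨p, hpk, -⟩ := third k k
    obtain ⟨q, hql, -⟩ := third l l
    rw [hfib k p (fun h => hpk h.symm) ν, hMd p,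
      hfib l q (fun h => hql h.symm) μ, hMd q] at h
    have ht : (Finset.univ.filter fun i => c k i = ν ∧ c l i = μ).card * d = 1 * d := by
      nlinarith
    exact Nat.eq_of_mul_eq_mul_right (by omega) ht
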